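/- Whole-Program ANF Correctness. If e is a λDS expression well-formed with respect to 0 (closed), and S is an infinite set of λANF variable names, then there exist a 1-hole context C, a result variable x, and a set S′ such that S ⊢ e, [] ⇒ C, x, S′, and e ⊑ C[halt x]: for every value v with [] ⊢ e ⇓ ⟨v⟩, there exists a value v′ with ∅ ⊢ C[halt x] ⇓ ⟨v′⟩ (evaluation from the empty target environment) and v ≈ v′. -/

import Mathlib

namespace ANF

abbrev Var := ℕ
abbrev CTag := ℕ

/-! ## Source language λDS (de Bruijn, call-by-value) -/

inductive SExp : Type where
  | var : ℕ → SExp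
  | slet : SExp → SExp → SExp
  | lam : SExp → SExp
  | app : SExp → SExp → SExp
  | constr : CTag → List SExp → SExp
  | smatch : SExp → List (CTag × SExp) → SExp

inductive SVal : Type where
  | constr : CTag → List SVal → SVal
  | clo : List SVal → SExp → SVal

inductive SRes : Type where
  | val : SVal → SRes
  | oot : SRes

-- Fuel-indexed big-step semantics of λDS: one fuel unit per rule application;
-- `OOT` is produced exactly when fuel is exhausted.
mutual
inductive SEval : List SVal → SExp → ℕ → SRes → Prop where
  | oot {ρ e} : SEval ρ e 0 .oot
  | var {ρ n v} : ρ[n]? = some v → SEval ρ (.var n) 1 (.val v)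
  | lam {ρ e} : SEval ρ (.lam e) 1 (.val (.clo ρ e))
  | slet {ρ e1 e2 v1 r f1 f2} :
      SEval ρ e1 f1 (.val v1) → SEval (v1 :: ρ) e2 f2 r →
      SEval ρ (.slet e1 e2) (f1 + f2 + 1) r
  | slet_oot {ρ e1 e2 f1} :
      SEval ρ e1 f1 .oot → SEval ρ (.slet e1 e2) (f1 + 1) .oot
  | app {ρ e1 e2 ρ' eb v2 r f1 f2 f3} :
      SEval ρ e1 f1 (.val (.clo ρ' eb)) →
      SEval ρ e2 f2 (.val v2) →
      SEval (v2 :: ρ') eb f3 r →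
      SEval ρ (.app e1 e2) (f1 + f2 + f3 + 1) r
  | app_oot1 {ρ e1 e2 f1} :
      SEval ρ e1 f1 .oot → SEval ρ (.app e1 e2) (f1 + 1) .oot
  | app_oot2 {ρ e1 e2 v1 f1 f2} :
      SEval ρ e1 f1 (.val v1) → SEval ρ e2 f2 .oot →
      SEval ρ (.app e1 e2) (f1 + f2 + 1) .oot
  | constr {ρ c es vs f} :
      SEvalList ρ es f (some vs) →
      SEval ρ (.constr c es) (f + 1) (.val (.constr c vs))
  | constr_oot {ρ c es f} :
      SEvalList ρ es f none → SEval ρ (.constr c es) (f + 1) .oot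
  | smatch {ρ e bs c vs e' r f1 f2} :
      SEval ρ e f1 (.val (.constr c vs)) →
      bs.lookup c = some e' →
      SEval ρ e' f2 r →
      SEval ρ (.smatch e bs) (f1 + f2 + 1) r
  | smatch_oot {ρ e bs f1} :
      SEval ρ e f1 .oot → SEval ρ (.smatch e bs) (f1 + 1) .oot

inductive SEvalList : List SVal → List SExp → ℕ → Option (List SVal) → Prop where
  | nil {ρ} : SEvalList ρ [] 0 (some [])
  | cons {ρ e es v vs f1 f2} :
      SEval ρ e f1 (.val v) → SEvalList ρ es f2 (some vs) →
      SEvalList ρ (e :: es) (f1 + f2) (some (v :: vs))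
  | cons_oot {ρ e es f1} :
      SEval ρ e f1 .oot → SEvalList ρ (e :: es) f1 none
  | cons_oot2 {ρ e es v f1 f2} :
      SEval ρ e f1 (.val v) → SEvalList ρ es f2 none →
      SEvalList ρ (e :: es) (f1 + f2) none
end

/-- `SWf n e`: all free de Bruijn indices of `e` are below `n`. -/
inductive SWf : ℕ → SExp → Prop where
  | var {n m} : m < n → SWf n (.var m)
  | slet {n e1 e2} : SWf n e1 → SWf (n + 1) e2 → SWf n (.slet e1 e2)
  | lam {n e} : SWf (n + 1) e → SWf n (.lam e)
  | app {n e1 e2} : SWf n e1 → SWf n e2 → SWf n (.app e1 e2)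
  | constr {n c es} : (∀ e ∈ es, SWf n e) → SWf n (.constr c es)
  | smatch {n e bs} : SWf n e → (∀ b ∈ bs, SWf n b.2) → SWf n (.smatch e bs)

/-- Well-formed source values: every closure `Clo(ρ, e)` has `e` well-formed
w.r.t. `|ρ| + 1` and `ρ` well-formed. -/
inductive SValWf : SVal → Prop where
  | constr {c vs} : (∀ v ∈ vs, SValWf v) → SValWf (.constr c vs)
  | clo {ρ e} : (∀ v ∈ ρ, SValWf v) → SWf (ρ.length + 1) e → SValWf (.clo ρ e)

def SEnvWf (ρ : List SVal) : Prop := ∀ v ∈ ρ, SValWf v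

/-! ## Target language λANF (named variables) -/

inductive TExp : Type where
  | constr : Var → CTag → List Var → TExp → TExp    -- let x = C(ys) in e
  | proj : Var → Var → ℕ → TExp → TExp              -- let x = y.i in e
  | fn : Var → List Var → TExp → TExp → TExp        -- fun f xs = e1 in e2
  | call : Var → Var → List Var → TExp → TExp       -- let x = f ys in e
  | ccase : Var → List (CTag × TExp) → TExp         -- case y of [Ci → ei]
  | tailcall : Var → List Var → TExp                -- f xs
  | halt : Var → TExp                               -- halt x

inductive TVal : Type where
  | constr : CTag → List TVal → TVal
  | clo : (Var → Option TVal) → Var → List Var → TExp → TVal  -- Clo(σ, fun f xs = e)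

abbrev TEnv := Var → Option TVal

def upd (σ : TEnv) (x : Var) (v : TVal) : TEnv :=
  fun y => if y = x then some v else σ y

def updList (σ : TEnv) (xs : List Var) (vs : List TVal) : TEnv :=
  (xs.zip vs).foldl (fun σ p => upd σ p.1 p.2) σ

def getList (σ : TEnv) (xs : List Var) : Option (List TVal) := xs.mapM σ

inductive TRes : Type where
  | val : TVal → TRes
  | oot : TRes

/-- Fuel-indexed big-step semantics of λANF: one fuel unit per rule application. -/
inductive TEval : TEnv → TExp → ℕ → TRes → Prop where
  | oot {σ e} : TEval σ e 0 .oot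
  | constr {σ x c ys e vs f r} :
      getList σ ys = some vs →
      TEval (upd σ x (.constr c vs)) e f r →
      TEval σ (.constr x c ys e) (f + 1) r
  | proj {σ x y i e c vs v f r} :
      σ y = some (.constr c vs) → vs[i]? = some v →
      TEval (upd σ x v) e f r →
      TEval σ (.proj x y i e) (f + 1) r
  | fn {σ f xs e1 e2 fu r} :
      TEval (upd σ f (.clo σ f xs e1)) e2 fu r →
      TEval σ (.fn f xs e1 e2) (fu + 1) r
  | call {σ x g ys e σ' g' xs eb vs v f1 f2 r} :
      σ g = some (.clo σ' g' xs eb) →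
      getList σ ys = some vs →
      xs.length = vs.length →
      TEval (updList (upd σ' g' (.clo σ' g' xs eb)) xs vs) eb f1 (.val v) →
      TEval (upd σ x v) e f2 r →
      TEval σ (.call x g ys e) (f1 + f2 + 1) r
  | call_oot {σ x g ys e σ' g' xs eb vs f1} :
      σ g = some (.clo σ' g' xs eb) →
      getList σ ys = some vs →
      xs.length = vs.length →
      TEval (updList (upd σ' g' (.clo σ' g' xs eb)) xs vs) eb f1 .oot →
      TEval σ (.call x g ys e) (f1 + 1) .oot
  | ccase {σ y bs c vs e' f r} :
      σ y = some (.constr c vs) →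
      bs.lookup c = some e' →
      TEval σ e' f r →
      TEval σ (.ccase y bs) (f + 1) r
  | tailcall {σ g ys σ' g' xs eb vs f r} :
      σ g = some (.clo σ' g' xs eb) →
      getList σ ys = some vs →
      xs.length = vs.length →
      TEval (updList (upd σ' g' (.clo σ' g' xs eb)) xs vs) eb f r →
      TEval σ (.tailcall g ys) (f + 1) r
  | halt {σ x v} :
      σ x = some v → TEval σ (.halt x) 1 (.val v)

/-! ## 1-hole contexts (hole in tail position) -/

inductive Ctx : Type where
  | hole : Ctx
  | constr : Var → CTag → List Var → Ctx → Ctx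
  | proj : Var → Var → ℕ → Ctx → Ctx
  | call : Var → Var → List Var → Ctx → Ctx
  | fn : Var → List Var → TExp → Ctx → Ctx

def Ctx.plug : Ctx → TExp → TExp
  | .hole, e => e
  | .constr x c ys C, e => .constr x c ys (C.plug e)
  | .proj x y i C, e => .proj x y i (C.plug e)
  | .call x g ys C, e => .call x g ys (C.plug e)
  | .fn f xs eb C, e => .fn f xs eb (C.plug e)

def Ctx.comp : Ctx → Ctx → Ctx
  | .hole, D => D
  | .constr x c ys C, D => .constr x c ys (C.comp D)
  | .proj x y i C, D => .proj x y i (C.comp D)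
  | .call x g ys C, D => .call x g ys (C.comp D)
  | .fn f xs eb C, D => .fn f xs eb (C.comp D)

/-! ## Free and bound variables of λANF expressions and contexts -/

inductive TExp.FV : TExp → Var → Prop where
  | constr_arg {x c ys e y} : y ∈ ys → TExp.FV (.constr x c ys e) y
  | constr_cont {x c ys e z} : TExp.FV e z → z ≠ x → TExp.FV (.constr x c ys e) z
  | proj_scrut {x y i e} : TExp.FV (.proj x y i e) y
  | proj_cont {x y i e z} : TExp.FV e z → z ≠ x → TExp.FV (.proj x y i e) z
  | fn_body {f xs e1 e2 z} : TExp.FV e1 z → z ≠ f → z ∉ xs → TExp.FV (.fn f xs e1 e2) z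
  | fn_cont {f xs e1 e2 z} : TExp.FV e2 z → z ≠ f → TExp.FV (.fn f xs e1 e2) z
  | call_fn {x g ys e} : TExp.FV (.call x g ys e) g
  | call_arg {x g ys e y} : y ∈ ys → TExp.FV (.call x g ys e) y
  | call_cont {x g ys e z} : TExp.FV e z → z ≠ x → TExp.FV (.call x g ys e) z
  | ccase_scrut {y bs} : TExp.FV (.ccase y bs) y
  | ccase_branch {y bs c e' z} : (c, e') ∈ bs → TExp.FV e' z → TExp.FV (.ccase y bs) z
  | tailcall_fn {g ys} : TExp.FV (.tailcall g ys) g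
  | tailcall_arg {g ys y} : y ∈ ys → TExp.FV (.tailcall g ys) y
  | halt {x} : TExp.FV (.halt x) x

/-- Variables bound somewhere inside a λANF expression. -/
inductive TExp.BV : TExp → Var → Prop where
  | constr_bind {x c ys e} : TExp.BV (.constr x c ys e) x
  | constr_cont {x c ys e z} : TExp.BV e z → TExp.BV (.constr x c ys e) z
  | proj_bind {x y i e} : TExp.BV (.proj x y i e) x
  | proj_cont {x y i e z} : TExp.BV e z → TExp.BV (.proj x y i e) z
  | fn_name {f xs e1 e2} : TExp.BV (.fn f xs e1 e2) f
  | fn_param {f xs e1 e2 x} : x ∈ xs → TExp.BV (.fn f xs e1 e2) x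
  | fn_body {f xs e1 e2 z} : TExp.BV e1 z → TExp.BV (.fn f xs e1 e2) z
  | fn_cont {f xs e1 e2 z} : TExp.BV e2 z → TExp.BV (.fn f xs e1 e2) z
  | call_bind {x g ys e} : TExp.BV (.call x g ys e) x
  | call_cont {x g ys e z} : TExp.BV e z → TExp.BV (.call x g ys e) z
  | ccase_branch {y bs c e' z} : (c, e') ∈ bs → TExp.BV e' z → TExp.BV (.ccase y bs) z

/-- Variables bound by a 1-hole context (including variables bound inside the
bodies of functions hanging off it). -/
inductive Ctx.BV : Ctx → Var → Prop where
  | constr_bind {x c ys C} : Ctx.BV (.constr x c ys C) x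
  | constr_cont {x c ys C z} : Ctx.BV C z → Ctx.BV (.constr x c ys C) z
  | proj_bind {x y i C} : Ctx.BV (.proj x y i C) x
  | proj_cont {x y i C z} : Ctx.BV C z → Ctx.BV (.proj x y i C) z
  | call_bind {x g ys C} : Ctx.BV (.call x g ys C) x
  | call_cont {x g ys C z} : Ctx.BV C z → Ctx.BV (.call x g ys C) z
  | fn_name {f xs eb C} : Ctx.BV (.fn f xs eb C) f
  | fn_param {f xs eb C x} : x ∈ xs → Ctx.BV (.fn f xs eb C) x
  | fn_body {f xs eb C z} : TExp.BV eb z → Ctx.BV (.fn f xs eb C) z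
  | fn_cont {f xs eb C z} : Ctx.BV C z → Ctx.BV (.fn f xs eb C) z

/-! ## Step-indexed logical relation on λANF -/

/-- Result relation relative to a value relation. -/
def ResRelOf (V : TVal → TVal → Prop) : TRes → TRes → Prop
  | .oot, .oot => True
  | .val v1, .val v2 => V v1 v2
  | _, _ => False

/-- Expression (configuration) relation relative to a value relation. -/
def ExpRelOf (V : TVal → TVal → Prop) (σ1 : TEnv) (e1 : TExp) (σ2 : TEnv) (e2 : TExp) : Prop :=
  ∀ f1 r1, TEval σ1 e1 f1 r1 →
    ∃ f2 r2, TEval σ2 e2 f2 r2 ∧ ResRelOf V r1 r2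

/-- Value relation at index `k`, given the relation at all smaller indices. -/
inductive ValRelAux (k : ℕ) (rec : (i : ℕ) → i < k → TVal → TVal → Prop) :
    TVal → TVal → Prop where
  | constr {c vs1 vs2} :
      vs1.length = vs2.length →
      (∀ (j : ℕ) v1 v2, vs1[j]? = some v1 → vs2[j]? = some v2 → ValRelAux k rec v1 v2) →
      ValRelAux k rec (.constr c vs1) (.constr c vs2)
  | clo {σ1 σ2 : TEnv} {f g : Var} {xs ys : List Var} {e1 e2 : TExp} :
      (∀ i (h : i < k) (vs1 vs2 : List TVal),
        vs1.length = vs2.length →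
        (∀ (j : ℕ) v1 v2, vs1[j]? = some v1 → vs2[j]? = some v2 → rec i h v1 v2) →
        xs.length = vs1.length →
        ys.length = vs2.length ∧
        ExpRelOf (rec i h)
          (updList (upd σ1 f (.clo σ1 f xs e1)) xs vs1) e1
          (updList (upd σ2 g (.clo σ2 g ys e2)) ys vs2) e2) →
      ValRelAux k rec (.clo σ1 f xs e1) (.clo σ2 g ys e2)

/-- Step-indexed value relation `v1 ≼k v2`. -/
def ValRel (k : ℕ) : TVal → TVal → Prop :=
  ValRelAux k (fun i h => ValRel i)
termination_by k
decreasing_by exact h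

/-- Step-indexed result relation `r1 ≼k r2`. -/
def ResRel (k : ℕ) : TRes → TRes → Prop := ResRelOf (ValRel k)

/-- Step-indexed expression relation `(σ1, e1) ⪅k (σ2, e2)`. -/
def ExpRel (k : ℕ) : TEnv → TExp → TEnv → TExp → Prop := ExpRelOf (ValRel k)

/-! ## The relational ANF transformation -/

-- `AnfRel S e xs C r S'` is the relational ANF transformation `S ⊢ e, x⃗ ⇒ C, r, S′`.
mutual
inductive AnfRel : Set Var → SExp → List Var → Ctx → Var → Set Var → Prop where
  | var {S n xs y} :
      xs[n]? = some y →
      AnfRel S (.var n) xs .hole y S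
  | lam {S S' e xs x1 f C1 r1} :
      x1 ∈ S → f ∈ S \ {x1} →
      AnfRel (S \ {x1, f}) e (x1 :: xs) C1 r1 S' →
      AnfRel S (.lam e) xs (.fn f [x1] (C1.plug (.halt r1)) .hole) f S'
  | app {S1 S2 S3 e1 e2 xs C1 C2 x1 x2 r} :
      AnfRel S1 e1 xs C1 x1 S2 →
      AnfRel S2 e2 xs C2 x2 S3 →
      r ∈ S3 →
      AnfRel S1 (.app e1 e2) xs ((C1.comp C2).comp (.call r x1 [x2] .hole)) r (S3 \ {r})
  | constr {S1 S2 c es xs C ys z} :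
      z ∈ S1 →
      AnfRelList (S1 \ {z}) es xs C ys S2 →
      AnfRel S1 (.constr c es) xs (C.comp (.constr z c ys .hole)) z S2
  | slet {S1 S2 S3 e1 e2 xs C1 C2 x1 x2} :
      AnfRel S1 e1 xs C1 x1 S2 →
      AnfRel S2 e2 (x1 :: xs) C2 x2 S3 →
      AnfRel S1 (.slet e1 e2) xs (C1.comp C2) x2 S3
  | smatch {S1 S2 S3 e bs bs' xs C1 y jp d r} :
      AnfRel S1 e xs C1 y S2 →
      jp ∈ S2 → d ∈ S2 \ {jp} →
      AnfRelBranches (S2 \ {jp, d}) bs xs bs' S3 →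
      r ∈ S3 →
      AnfRel S1 (.smatch e bs) xs
        ((C1.comp (.fn jp [d] (.ccase d bs') .hole)).comp (.call r jp [y] .hole))
        r (S3 \ {r})

/-- Left-to-right translation of a list of arguments, threading the name set. -/
inductive AnfRelList : Set Var → List SExp → List Var → Ctx → List Var → Set Var → Prop where
  | nil {S xs} : AnfRelList S [] xs .hole [] S
  | cons {S1 S2 S3 e es xs C1 C2 y ys} :
      AnfRel S1 e xs C1 y S2 →
      AnfRelList S2 es xs C2 ys S3 →
      AnfRelList S1 (e :: es) xs (C1.comp C2) (y :: ys) S3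

/-- Translation of match branches. -/
inductive AnfRelBranches : Set Var → List (CTag × SExp) → List Var →
    List (CTag × TExp) → Set Var → Prop where
  | nil {S xs} : AnfRelBranches S [] xs [] S
  | cons {S1 S2 S3 c e es xs C r bs'} :
      AnfRel S1 e xs C r S2 →
      AnfRelBranches S2 es xs bs' S3 →
      AnfRelBranches S1 ((c, e) :: es) xs ((c, C.plug (.halt r)) :: bs') S3
end

/-! ## The ANF value translation relation -/

inductive AnfValRel : SVal → TVal → Prop where
  | constr {c vs vs'} :
      vs.length = vs'.length →
      (∀ (i : ℕ) v v', vs[i]? = some v → vs'[i]? = some v' → AnfValRel v v') →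
      AnfValRel (.constr c vs) (.constr c vs')
  | clo {ρ e σ f x1 C1 r1} {S S' : Set Var} {xs : List Var} :
      (∀ x ∈ xs, x ∉ S ∪ {x1, f}) →
      AnfRel S e (x1 :: xs) C1 r1 S' →
      xs.length = ρ.length →
      (∀ (i : ℕ) x, xs[i]? = some x → (σ x).isSome) →
      (∀ (i : ℕ) x v v', xs[i]? = some x → ρ[i]? = some v → σ x = some v' → AnfValRel v v') →
      AnfValRel (.clo ρ e) (.clo σ f [x1] (C1.plug (.halt r1)))

/-- `anf_env_rel(x⃗, ρ, σ)`. -/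
def AnfEnvRel (xs : List Var) (ρ : List SVal) (σ : TEnv) : Prop :=
  xs.length = ρ.length ∧
  ∀ (i : ℕ) x v, xs[i]? = some x → ρ[i]? = some v →
    ∃ v', σ x = some v' ∧ AnfValRel v v'

/-! ## The observation relation -/

inductive ObsRel : SVal → TVal → Prop where
  | constr {c vs vs'} :
      vs.length = vs'.length →
      (∀ (i : ℕ) v v', vs[i]? = some v → vs'[i]? = some v' → ObsRel v v') →
      ObsRel (.constr c vs) (.constr c vs')
  | clo {ρ e σ f xs e'} : ObsRel (.clo ρ e) (.clo σ f xs e')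



/-! ## Auxiliary machinery for the proof -/

lemma upd_self (σ : TEnv) (x : Var) (v : TVal) : upd σ x v x = some v := by simp [upd]

lemma upd_ne (σ : TEnv) {x y : Var} (v : TVal) (h : y ≠ x) : upd σ x v y = σ y := by
  simp [upd, h]

lemma getList_nil (σ : TEnv) : getList σ [] = some [] := rfl

lemma getList_cons {σ : TEnv} {y w ys ws} (h1 : σ y = some w) (h2 : getList σ ys = some ws) :
    getList σ (y :: ys) = some (w :: ws) := by
  show (y :: ys).mapM σ = _
  rw [List.mapM_cons, h1]
  show (getList σ ys).bind _ = _
  rw [h2]; rfl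

lemma getList_one {σ : TEnv} {y w} (h : σ y = some w) : getList σ [y] = some [w] :=
  getList_cons h (getList_nil σ)

lemma plug_comp (C D : Ctx) (e : TExp) : (C.comp D).plug e = C.plug (D.plug e) := by
  induction C <;> simp [Ctx.comp, Ctx.plug, *]

/-- Value invariant used in the simulation proof. -/
inductive GV : SVal → TVal → Prop where
  | constr {c vs vs'} :
      vs.length = vs'.length →
      (∀ (i : ℕ) v v', vs[i]? = some v → vs'[i]? = some v' → GV v v') →
      GV (.constr c vs) (.constr c vs')
  | clo {ρ e σc f x1 C1 r1} {S S' : Set Var} {xs : List Var} :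
      x1 ∉ xs →
      (∀ x ∈ xs, x ≠ f) →
      (∀ x ∈ x1 :: xs, x ∉ S) →
      AnfRel S e (x1 :: xs) C1 r1 S' →
      xs.length = ρ.length →
      (∀ (i : ℕ) x, xs[i]? = some x → (σc x).isSome) →
      (∀ (i : ℕ) x v v', xs[i]? = some x → ρ[i]? = some v → σc x = some v' → GV v v') →
      GV (.clo ρ e) (.clo σc f [x1] (C1.plug (.halt r1)))

def GEnv (xs : List Var) (ρ : List SVal) (σ : TEnv) : Prop :=
  xs.length = ρ.length ∧
  ∀ (i : ℕ) x v, xs[i]? = some x → ρ[i]? = some v → ∃ v', σ x = some v' ∧ GV v v'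

lemma GEnv.of_agree {xs ρ σ σ'} (h : GEnv xs ρ σ) (hag : ∀ x ∈ xs, σ' x = σ x) :
    GEnv xs ρ σ' := by
  refine ⟨h.1, fun i x v hx hv => ?_⟩
  obtain ⟨w, hw, hgw⟩ := h.2 i x v hx hv
  exact ⟨w, (hag x (List.mem_of_getElem? hx)).trans hw, hgw⟩

lemma GEnv.rho_lookup {xs ρ σ} (h : GEnv xs ρ σ) {i : ℕ} {x}
    (hx : xs[i]? = some x) : ∃ v, ρ[i]? = some v := by
  have hi : i < xs.length := by
    by_contra hge
    rw [List.getElem?_eq_none (by omega)] at hx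
    cases hx
  have hi' : i < ρ.length := by rw [← h.1]; exact hi
  exact ⟨ρ[i], List.getElem?_eq_getElem hi'⟩

lemma gv_obs {v w} (h : GV v w) : ObsRel v w := by
  induction h with
  | constr h1 _ ih => exact ObsRel.constr h1 ih
  | clo => exact ObsRel.clo

/-- Name-set bookkeeping facts about the ANF transformation. -/
theorem propsE {S : Set Var} {e xs C r} {S' : Set Var} (h : AnfRel S e xs C r S') :
    S' ⊆ S ∧ ((∀ x ∈ xs, x ∉ S) → r ∉ S') := by
  induction h using AnfRel.rec
    (motive_2 := fun S es xs C ys S' _ =>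
      S' ⊆ S ∧ ((∀ x ∈ xs, x ∉ S) → ∀ y ∈ ys, y ∉ S'))
    (motive_3 := fun S bs xs bs' S' _ => S' ⊆ S)
  · rename_i hy
    exact ⟨subset_rfl, fun hd => hd _ (List.mem_of_getElem? hy)⟩
  · rename_i hx1 hfm hb ih
    exact ⟨ih.1.trans Set.diff_subset, fun _ hr => (ih.1 hr).2 (by simp)⟩
  · rename_i h1 h2 hr ih1 ih2
    exact ⟨Set.diff_subset.trans (ih2.1.trans ih1.1), fun _ hm => hm.2 rfl⟩
  · rename_i hz hl ih
    exact ⟨ih.1.trans Set.diff_subset, fun _ hz2 => (ih.1 hz2).2 rfl⟩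
  · rename_i h1 h2 ih1 ih2
    refine ⟨ih2.1.trans ih1.1, fun hd => ih2.2 ?_⟩
    intro x hx
    rcases List.mem_cons.mp hx with h | h
    · subst h; exact ih1.2 hd
    · exact fun hm => hd x h (ih1.1 hm)
  · rename_i h1 hjp hd hbr hr ih1 ihbr
    exact ⟨Set.diff_subset.trans (ihbr.trans (Set.diff_subset.trans ih1.1)),
      fun _ hm => hm.2 rfl⟩
  · exact ⟨subset_rfl, fun _ y hy => absurd hy List.not_mem_nil⟩
  · rename_i h1 h2 ih1 ih2
    refine ⟨ih2.1.trans ih1.1, ?_⟩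
    intro hd z hz
    rcases List.mem_cons.mp hz with h | h
    · subst h; exact fun hm => (ih1.2 hd) (ih2.1 hm)
    · exact ih2.2 (fun x hx hm => hd x hx (ih1.1 hm)) z h
  · exact subset_rfl
  · rename_i h1 h2 ih1 ih2
    exact ih2.trans ih1.1

lemma propsB : ∀ (bs : List (CTag × SExp)) (S : Set Var) (xs : List Var) bs'
    (S' : Set Var), AnfRelBranches S bs xs bs' S' → S' ⊆ S := by
  intro bs
  induction bs with
  | nil => intro S xs bs' S' h; cases h; exact subset_rfl
  | cons hd tl ih =>
    intro S xs bs' S' h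
    cases h with
    | cons h1 h2 => exact (ih _ _ _ _ h2).trans (propsE h1).1

lemma branchesLookup : ∀ (bs : List (CTag × SExp)) (S : Set Var) (xs : List Var) bs'
    (S' : Set Var), AnfRelBranches S bs xs bs' S' →
    ∀ c e', bs.lookup c = some e' →
      ∃ (Ta Tb : Set Var), ∃ Ck rk, Ta ⊆ S ∧ AnfRel Ta e' xs Ck rk Tb ∧
        bs'.lookup c = some (Ck.plug (.halt rk)) := by
  intro bs
  induction bs with
  | nil => intro S xs bs' S' h c e' hl; simp [List.lookup] at hl
  | cons hd tl ih =>
    intro S xs bs' S' h c e' hl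
    cases h with
    | cons h1 h2 =>
      rename_i S2 c0 e0 C r bs2
      by_cases hc : c = c0
      · subst hc
        simp [List.lookup] at hl
        subst hl
        refine ⟨S, S2, C, r, subset_rfl, h1, ?_⟩
        simp [List.lookup]
      · have hcc : (c == c0) = false := by simp [hc]
        simp only [List.lookup, hcc] at hl ⊢
        obtain ⟨Ta, Tb, Ck, rk, hTa, hCk, hlk⟩ := ih _ _ _ _ h2 c e' hl
        exact ⟨Ta, Tb, Ck, rk, hTa.trans (propsE h1).1, hCk, hlk⟩

/-- The statement of the simulation lemma at fuel bound `F`. -/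
def MainStmt (F : ℕ) : Prop :=
  ∀ {f : ℕ} {ρ : List SVal} {e : SExp} {v : SVal} {S : Set Var} {xs : List Var}
    {C : Ctx} {r : Var} {S' : Set Var} {σ : TEnv},
    f ≤ F → SEval ρ e f (.val v) → AnfRel S e xs C r S' →
    (∀ x ∈ xs, x ∉ S) → GEnv xs ρ σ →
    ∃ (σ' : TEnv) (v' : TVal), GV v v' ∧ σ' r = some v' ∧
      (∀ y, y ∉ S → σ' y = σ y) ∧
      (∀ ek fk rk, TEval σ' ek fk rk → ∃ f', TEval σ (C.plug ek) f' rk)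

lemma listMain (F : ℕ) (IH : MainStmt F) :
    ∀ (es : List SExp) (ρ : List SVal) (f : ℕ) (vs : List SVal) (S : Set Var)
      (xs : List Var) (C : Ctx) (ys : List Var) (S' : Set Var) (σ : TEnv),
      f ≤ F → SEvalList ρ es f (some vs) → AnfRelList S es xs C ys S' →
      (∀ x ∈ xs, x ∉ S) → GEnv xs ρ σ →
      ∃ (σ' : TEnv) (vs' : List TVal),
        (∀ y, y ∉ S → σ' y = σ y) ∧ getList σ' ys = some vs' ∧
        vs'.length = vs.length ∧
        (∀ (j : ℕ) v v', vs[j]? = some v → vs'[j]? = some v' → GV v v') ∧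
        (∀ ek fk rk, TEval σ' ek fk rk → ∃ f', TEval σ (C.plug ek) f' rk) := by
  intro es
  induction es with
  | nil =>
    intro ρ f vs S xs C ys S' σ hf hev hanf hdisj henv
    cases hanf
    cases hev
    exact ⟨σ, [], fun y _ => rfl, getList_nil σ, rfl,
      (by intro j v v' h hv; simp at h), fun ek fk rk hk => ⟨fk, hk⟩⟩
  | cons e es ih =>
    intro ρ f vs S xs C ys S' σ hf hev hanf hdisj henv
    cases hanf with
    | cons h1 h2 =>
      cases hev with
      | cons he htl =>
        obtain ⟨σ1, w, hgw, hy, hoff1, hplug1⟩ := IH (by omega) he h1 hdisj henv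
        have hS2S := (propsE h1).1
        have hdisj2 := fun x hx h => hdisj x hx (hS2S h)
        have henv2 : GEnv xs ρ σ1 :=
          henv.of_agree (fun x hx => hoff1 x (hdisj x hx))
        obtain ⟨σ2, ws, hoff2, hget2, hlen2, hpt2, hplug2⟩ :=
          ih ρ _ _ _ xs _ _ S' σ1 (by omega) htl h2 hdisj2 henv2
        have hyS2 := (propsE h1).2 hdisj
        refine ⟨σ2, w :: ws, ?_, ?_, (by simp [hlen2]), ?_, ?_⟩
        · intro z hz; rw [hoff2 z (fun h => hz (hS2S h)), hoff1 z hz]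
        · exact getList_cons (by rw [hoff2 _ hyS2]; exact hy) hget2
        · intro j v1 v1' hv1 hv1'
          cases j with
          | zero =>
            simp at hv1 hv1'; subst hv1; subst hv1'; exact hgw
          | succ j =>
            simp at hv1 hv1'; exact hpt2 j _ _ hv1 hv1'
        · intro ek fk rk hk
          obtain ⟨f2', h2'⟩ := hplug2 ek fk rk hk
          obtain ⟨f1', h1'⟩ := hplug1 _ _ _ h2'
          exact ⟨f1', by rwa [plug_comp]⟩

/-- The simulation lemma. -/
theorem mainE : ∀ F, MainStmt F := by
  intro F
  induction F with
  | zero =>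
    intro f ρ e v S xs C r S' σ hf hev hanf hdisj henv
    have hf0 : f = 0 := Nat.le_zero.mp hf
    subst hf0
    cases hev
  | succ F IH =>
    intro f ρ e v S xs C r S' σ hf hev hanf hdisj henv
    cases hev with
    | var hlk =>
      cases hanf with
      | var hx =>
        obtain ⟨w, hw, hgw⟩ := henv.2 _ _ _ hx hlk
        exact ⟨σ, w, hgw, hw, fun y _ => rfl, fun ek fk rk hk => ⟨fk, hk⟩⟩
    | lam =>
      cases hanf with
      | lam hx1 hfm hb =>
        rename_i e0 x1 C1 r1
        have hfvS : r ∈ S := hfm.1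
        refine ⟨upd σ r (.clo σ r [x1] (C1.plug (.halt r1))),
                .clo σ r [x1] (C1.plug (.halt r1)), ?_, upd_self _ _ _, ?_, ?_⟩
        · refine GV.clo ?_ ?_ ?_ hb henv.1 ?_ ?_
          · exact fun hx => hdisj x1 hx hx1
          · intro x hx hxf; exact hdisj x hx (by rw [hxf]; exact hfvS)
          · intro x hx
            rcases List.mem_cons.mp hx with h | h
            · subst h; intro hmem; exact hmem.2 (by simp)
            · intro hmem; exact hdisj x h hmem.1
          · intro i x hx
            obtain ⟨v0, hv0⟩ := henv.rho_lookup hx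
            obtain ⟨w, hw, _⟩ := henv.2 i x v0 hx hv0
            simp [hw]
          · intro i x v0 v0' hx hv0 hσ
            obtain ⟨w, hw, hgw⟩ := henv.2 i x v0 hx hv0
            rw [hw] at hσ
            cases hσ
            exact hgw
        · intro y hy
          have hne : y ≠ r := fun h => hy (by rw [h]; exact hfvS)
          exact upd_ne σ _ hne
        · intro ek fk rk hk
          exact ⟨fk + 1, TEval.fn hk⟩
    | slet he1 he2 =>
      rename_i v1 f1 f2
      cases hanf with
      | slet h1 h2 =>
        rename_i S2 C1 C2 x1
        obtain ⟨σ1, w1, hgw1, hx1v, hoff1, hplug1⟩ := IH (by omega) he1 h1 hdisj henv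
        have hS2S := (propsE h1).1
        have hx1S2 : x1 ∉ S2 := (propsE h1).2 hdisj
        have hdisj2 : ∀ x ∈ x1 :: xs, x ∉ S2 := by
          intro x hx
          rcases List.mem_cons.mp hx with h | h
          · subst h; exact hx1S2
          · exact fun hm => hdisj x h (hS2S hm)
        have henv2 : GEnv (x1 :: xs) (v1 :: ρ) σ1 := by
          refine ⟨(by simp [henv.1]), ?_⟩
          intro i x v0 hx hv
          cases i with
          | zero =>
            simp at hx hv; subst hx; subst hv; exact ⟨w1, hx1v, hgw1⟩
          | succ i =>
            simp at hx hv
            obtain ⟨w, hw, hgw⟩ := henv.2 i x v0 hx hv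
            refine ⟨w, ?_, hgw⟩
            rw [hoff1 x (hdisj x (List.mem_of_getElem? hx))]
            exact hw
        obtain ⟨σ2, w2, hgw2, hx2v, hoff2, hplug2⟩ := IH (by omega) he2 h2 hdisj2 henv2
        refine ⟨σ2, w2, hgw2, hx2v, ?_, ?_⟩
        · intro y hy; rw [hoff2 y (fun h => hy (hS2S h)), hoff1 y hy]
        · intro ek fk rk hk
          obtain ⟨f2', h2'⟩ := hplug2 ek fk rk hk
          obtain ⟨f1', h1'⟩ := hplug1 _ _ _ h2'
          exact ⟨f1', by rwa [plug_comp]⟩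
    | app he1 he2 he3 =>
      rename_i ρc eb v2 f1 f2 f3
      cases hanf with
      | app h1 h2 hr =>
        rename_i S2 S3 C1 C2 x1 x2
        obtain ⟨σ1, w1, hgw1, hx1v, hoff1, hplug1⟩ := IH (by omega) he1 h1 hdisj henv
        have hS2S := (propsE h1).1
        have hS3S2 := (propsE h2).1
        have hx1S2 : x1 ∉ S2 := (propsE h1).2 hdisj
        have hdisj2 := fun x hx h => hdisj x hx (hS2S h)
        have henv1 : GEnv xs ρ σ1 :=
          henv.of_agree (fun x hx => hoff1 x (hdisj x hx))
        obtain ⟨σ2, w2, hgw2, hx2v, hoff2, hplug2⟩ := IH (by omega) he2 h2 hdisj2 henv1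
        cases hgw1 with
        | clo hx1c hfs hdisjc hbc hlenc hsomec hrelc =>
          rename_i σc fc x1c Cb rb Sc Sc' xsc
          have henvb : GEnv (x1c :: xsc) (v2 :: ρc)
              (updList (upd σc fc (.clo σc fc [x1c] (Cb.plug (.halt rb)))) [x1c] [w2]) := by
            refine ⟨(by simp [hlenc]), ?_⟩
            intro i x v0 hx hv
            cases i with
            | zero =>
              simp at hx hv; subst hx; subst hv
              refine ⟨w2, ?_, hgw2⟩
              show upd (upd σc fc (.clo σc fc [x1c] (Cb.plug (.halt rb)))) x1c w2 x1c
                = some w2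
              exact upd_self _ _ _
            | succ i =>
              simp at hx hv
              have hxm : x ∈ xsc := List.mem_of_getElem? hx
              have hs := hsomec i x hx
              obtain ⟨w, hw⟩ := Option.isSome_iff_exists.mp hs
              have hgw := hrelc i x v0 w hx hv hw
              refine ⟨w, ?_, hgw⟩
              show upd (upd σc fc (.clo σc fc [x1c] (Cb.plug (.halt rb)))) x1c w2 x
                = some w
              have hne1 : x ≠ x1c := fun h => hx1c (h ▸ hxm)
              have hne2 : x ≠ fc := hfs x hxm
              rw [upd_ne _ _ hne1, upd_ne _ _ hne2]
              exact hw
          obtain ⟨σ3, v', hgv, hrbv, hoff3, hplug3⟩ := IH (by omega) he3 hbc hdisjc henvb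
          refine ⟨upd σ2 r v', v', hgv, upd_self _ _ _, ?_, ?_⟩
          · intro y hy
            have hne : y ≠ r := fun h => hy (by rw [h]; exact hS2S (hS3S2 hr))
            rw [upd_ne _ _ hne, hoff2 y (fun h => hy (hS2S h)), hoff1 y hy]
          · intro ek fk rk hk
            obtain ⟨fb, hb'⟩ := hplug3 (.halt rb) 1 (.val v') (TEval.halt hrbv)
            have hcall : TEval σ2 (.call r x1 [x2] ek) (fb + fk + 1) rk :=
              TEval.call (by rw [hoff2 x1 hx1S2]; exact hx1v)
                (getList_one hx2v) rfl hb' hk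
            obtain ⟨f2', h2'⟩ := hplug2 _ _ _ hcall
            obtain ⟨f1', h1'⟩ := hplug1 _ _ _ h2'
            refine ⟨f1', ?_⟩
            rw [plug_comp, plug_comp]
            exact h1'
    | constr hl =>
      rename_i c es vs fl
      cases hanf with
      | constr hz hle =>
        rename_i Cargs ys
        obtain ⟨σ1, vs', hoff1, hget1, hlen1, hpt1, hplug1⟩ :=
          listMain F IH es ρ fl vs _ xs Cargs ys S' σ (by omega) hl hle
            (fun x hx h => hdisj x hx h.1) henv
        refine ⟨upd σ1 r (.constr c vs'), .constr c vs',
          GV.constr hlen1.symm hpt1, upd_self _ _ _, ?_, ?_⟩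
        · intro y hy
          have hne : y ≠ r := fun h => hy (by rw [h]; exact hz)
          rw [upd_ne _ _ hne, hoff1 y (fun h => hy h.1)]
        · intro ek fk rk hk
          have hc : TEval σ1 (.constr r c ys ek) (fk + 1) rk := TEval.constr hget1 hk
          obtain ⟨f1', h1'⟩ := hplug1 _ _ _ hc
          refine ⟨f1', ?_⟩
          rw [plug_comp]
          exact h1'
    | smatch he hlk hbody =>
      rename_i e0 bs c vs ebr f1 f2
      cases hanf with
      | smatch h1 hjp hd hbr hr =>
        rename_i S2 S3 bs' C1 y jp d
        obtain ⟨σ1, w, hgw, hyv, hoff1, hplug1⟩ := IH (by omega) he h1 hdisj henv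
        cases hgw with
        | constr hlenw hptw =>
          rename_i vs'
          have hS2S := (propsE h1).1
          have hyS2 : y ∉ S2 := (propsE h1).2 hdisj
          obtain ⟨Ta, Tb, Ck, rk', hTa, hCk, hlk'⟩ :=
            branchesLookup bs _ xs bs' _ hbr c ebr hlk
          have hjpS : jp ∈ S := hS2S hjp
          have hdS : d ∈ S := hS2S hd.1
          have hTaS : Ta ⊆ S := fun a ha => hS2S (hTa ha).1
          have hdisjT : ∀ x ∈ xs, x ∉ Ta := fun x hx h => hdisj x hx (hTaS h)
          have henvb : GEnv xs ρ
              (updList (upd σ1 jp (.clo σ1 jp [d] (.ccase d bs'))) [d] [.constr c vs']) := by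
            refine henv.of_agree ?_
            intro x hx
            show upd (upd σ1 jp (.clo σ1 jp [d] (.ccase d bs'))) d (.constr c vs') x = σ x
            have hne1 : x ≠ d := fun h => hdisj x hx (by rw [h]; exact hdS)
            have hne2 : x ≠ jp := fun h => hdisj x hx (by rw [h]; exact hjpS)
            rw [upd_ne _ _ hne1, upd_ne _ _ hne2, hoff1 x (hdisj x hx)]
          obtain ⟨σ3, v', hgv, hrk', hoff3, hplug3⟩ :=
            IH (by omega) hbody hCk hdisjT henvb
          have hrS : r ∈ S := hS2S (propsB _ _ _ _ _ hbr hr).1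
          refine ⟨upd (upd σ1 jp (.clo σ1 jp [d] (.ccase d bs'))) r v', v', hgv,
            upd_self _ _ _, ?_, ?_⟩
          · intro y' hy'
            have hne1 : y' ≠ r := fun h => hy' (by rw [h]; exact hrS)
            have hne2 : y' ≠ jp := fun h => hy' (by rw [h]; exact hjpS)
            rw [upd_ne _ _ hne1, upd_ne _ _ hne2, hoff1 y' hy']
          · intro ek fk rk hk
            obtain ⟨fb, hb'⟩ := hplug3 (.halt rk') 1 (.val v') (TEval.halt hrk')
            have hcase : TEval
                (updList (upd σ1 jp (.clo σ1 jp [d] (.ccase d bs'))) [d] [.constr c vs'])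
                (.ccase d bs') (fb + 1) (.val v') :=
              TEval.ccase
                (show upd (upd σ1 jp (.clo σ1 jp [d] (.ccase d bs'))) d (.constr c vs') d
                    = some (.constr c vs') from upd_self _ _ _)
                hlk' hb'
            have hjpne : y ≠ jp := fun h => hyS2 (by rw [h]; exact hjp)
            have hcall : TEval (upd σ1 jp (.clo σ1 jp [d] (.ccase d bs')))
                (.call r jp [y] ek) ((fb + 1) + fk + 1) rk :=
              TEval.call (upd_self _ _ _)
                (getList_one (by rw [upd_ne _ _ hjpne]; exact hyv)) rfl hcase hk
            have hfn := TEval.fn hcall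
            obtain ⟨f1', h1'⟩ := hplug1 _ _ _ hfn
            refine ⟨f1', ?_⟩
            rw [plug_comp, plug_comp]
            exact h1'

/-- Totality of the ANF transformation. -/
theorem totalE : ∀ (N : ℕ) (e : SExp), sizeOf e ≤ N → ∀ (xs : List Var) (S : Set Var),
    SWf xs.length e → S.Infinite →
    ∃ (C : Ctx) (r : Var) (S' : Set Var), AnfRel S e xs C r S' ∧ S'.Infinite := by
  intro N
  induction N with
  | zero =>
    intro e he
    exfalso
    cases e <;> simp at he
  | succ N ih =>
    intro e he xs S hwf hS
    cases hwf with
    | var hm =>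
      exact ⟨.hole, _, S, AnfRel.var (List.getElem?_eq_getElem hm), hS⟩
    | lam hwb =>
      rename_i e0
      obtain ⟨x1, hx1⟩ := hS.nonempty
      obtain ⟨fv, hfv⟩ := (hS.diff (Set.finite_singleton x1)).nonempty
      have hS2 : (S \ {x1, fv}).Infinite := hS.diff ((Set.finite_singleton fv).insert x1)
      obtain ⟨C1, r1, S', h1, hS'⟩ := ih e0 (by simp at he; omega) (x1 :: xs) _
        (by simpa using hwb) hS2
      exact ⟨_, fv, S', AnfRel.lam hx1 hfv h1, hS'⟩
    | app hw1 hw2 =>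
      rename_i e1 e2
      obtain ⟨C1, x1, S2, h1, hS2⟩ := ih e1 (by simp at he; omega) xs S hw1 hS
      obtain ⟨C2, x2, S3, h2, hS3⟩ := ih e2 (by simp at he; omega) xs S2 hw2 hS2
      obtain ⟨r, hrm⟩ := hS3.nonempty
      exact ⟨_, r, _, AnfRel.app h1 h2 hrm, hS3.diff (Set.finite_singleton r)⟩
    | slet hw1 hw2 =>
      rename_i e1 e2
      obtain ⟨C1, x1, S2, h1, hS2⟩ := ih e1 (by simp at he; omega) xs S hw1 hS
      obtain ⟨C2, x2, S3, h2, hS3⟩ := ih e2 (by simp at he; omega) (x1 :: xs) S2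
        (by simpa using hw2) hS2
      exact ⟨_, x2, S3, AnfRel.slet h1 h2, hS3⟩
    | constr hws =>
      rename_i c es
      obtain ⟨z, hz⟩ := hS.nonempty
      have hS1 : (S \ {z}).Infinite := hS.diff (Set.finite_singleton z)
      have hlist : ∀ (l : List SExp), (∀ e' ∈ l, sizeOf e' ≤ N) →
          ∀ (S0 : Set Var), (∀ e' ∈ l, SWf xs.length e') → S0.Infinite →
          ∃ Cl ys, ∃ S' : Set Var, AnfRelList S0 l xs Cl ys S' ∧ S'.Infinite := by
        intro l
        induction l with
        | nil => exact fun _ S0 _ h => ⟨.hole, [], S0, AnfRelList.nil, h⟩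
        | cons a l ihl =>
          intro hsz S0 hwfs hS0
          obtain ⟨C1, y, S2, h1, hS2⟩ := ih a (hsz a (by simp)) xs S0 (hwfs a (by simp)) hS0
          obtain ⟨C2, ys, S3, h2, hS3⟩ := ihl (fun e' h => hsz e' (by simp [h])) S2
            (fun e' h => hwfs e' (by simp [h])) hS2
          exact ⟨_, y :: ys, S3, AnfRelList.cons h1 h2, hS3⟩
      obtain ⟨Cl, ys, S', hl, hS'⟩ := hlist es
        (fun e' h => by have := List.sizeOf_lt_of_mem h; simp at he; omega)
        (S \ {z}) hws hS1
      exact ⟨_, z, S', AnfRel.constr hz hl, hS'⟩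
    | smatch hw hbs =>
      rename_i e0 bs
      obtain ⟨C1, y, S2, h1, hS2⟩ := ih e0 (by simp at he; omega) xs S hw hS
      obtain ⟨jp, hjp⟩ := hS2.nonempty
      obtain ⟨d, hd⟩ := (hS2.diff (Set.finite_singleton jp)).nonempty
      have hS3i : (S2 \ {jp, d}).Infinite := hS2.diff ((Set.finite_singleton d).insert jp)
      have hbrs : ∀ (l : List (CTag × SExp)), (∀ b ∈ l, sizeOf b.2 ≤ N) →
          ∀ (S0 : Set Var), (∀ b ∈ l, SWf xs.length b.2) → S0.Infinite →
          ∃ bs', ∃ S' : Set Var, AnfRelBranches S0 l xs bs' S' ∧ S'.Infinite := by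
        intro l
        induction l with
        | nil => exact fun _ S0 _ h => ⟨[], S0, AnfRelBranches.nil, h⟩
        | cons b l ihl =>
          obtain ⟨cb, eb⟩ := b
          intro hsz S0 hwfs hS0
          obtain ⟨Cb, rb, S2', hb, hS2'⟩ := ih eb (hsz (cb, eb) (by simp)) xs S0
            (hwfs (cb, eb) (by simp)) hS0
          obtain ⟨bs2, S3', h2, hS3'⟩ := ihl (fun b' h => hsz b' (by simp [h])) S2'
            (fun b' h => hwfs b' (by simp [h])) hS2'
          exact ⟨_, S3', AnfRelBranches.cons hb h2, hS3'⟩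
      obtain ⟨bs', S3, hbr, hS3⟩ := hbrs bs
        (fun b hb => by
          obtain ⟨cb, eb⟩ := b
          have := List.sizeOf_lt_of_mem hb
          simp at he this ⊢
          omega)
        (S2 \ {jp, d}) hbs hS3i
      obtain ⟨r, hrm⟩ := hS3.nonempty
      exact ⟨_, r, _, AnfRel.smatch h1 hjp hd hbr hrm, hS3.diff (Set.finite_singleton r)⟩

/-- **Whole-Program ANF Correctness.** -/
theorem anf_whole_program
    (e : SExp) (hwf : SWf 0 e) (S : Set Var) (hS : S.Infinite) :
    ∃ (C : Ctx) (x : Var) (S' : Set Var),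
      AnfRel S e [] C x S' ∧
      ∀ v : SVal, (∃ f, SEval [] e f (.val v)) →
        ∃ v' : TVal,
          (∃ f, TEval (fun _ => none) (C.plug (.halt x)) f (.val v')) ∧
          ObsRel v v' := by
  obtain ⟨C, x, S', hrel, _⟩ := totalE (sizeOf e) e le_rfl [] S hwf hS
  refine ⟨C, x, S', hrel, ?_⟩
  rintro v ⟨f, hev⟩
  obtain ⟨σ', v', hgv, hx, _, hplug⟩ :=
    mainE f le_rfl hev hrel (by simp) ⟨rfl, by intro i x v h hv; simp at h⟩
  obtain ⟨f', h'⟩ := hplug (.halt x) 1 (.val v') (TEval.halt hx)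
  exact ⟨v', ⟨f', h'⟩, gv_obs hgv⟩

end ANF
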